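/- A bi-infinite word x over an ordered binary alphabet {a < b} is singular if and only if it is balanced. -/

import Mathlib

/-- Lexicographic order on finite words with the convention that
`u < v` whenever `v` is a proper prefix of `u`. -/
def Wlt {A : Type*} [LinearOrder A] : List A → List A → Prop
  | [], _ => False
  | _ :: _, [] => True
  | a :: u, b :: v => a < b ∨ (a = b ∧ Wlt u v)

/-- A finite word is singular if every factorization `x = reverse u ++ v ++ w`
with `v` nonempty, `v ≠ reverse v`, `u ≠ w` satisfies `v < v̄ ↔ w < u`. -/
def Singular {A : Type*} [LinearOrder A] (x : List A) : Prop :=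
  ∀ u v w : List A, x = u.reverse ++ v ++ w → v ≠ [] → v ≠ v.reverse → u ≠ w →
    (Wlt v v.reverse ↔ Wlt w u)

/-- Lexicographic (strict) order between one-sided infinite words. -/
def InfLt {A : Type*} [LinearOrder A] (x y : ℕ → A) : Prop :=
  ∃ n, (∀ i < n, x i = y i) ∧ x n < y n

/-- `s` is a finite factor of the bi-infinite word `x`. -/
def FactorZ {A : Type*} (x : ℤ → A) (s : List A) : Prop :=
  ∃ i : ℤ, s = (List.range s.length).map fun j => x (i + j)

/-- A bi-infinite word `x` is singular: for each occurrence of a nonempty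
non-palindromic factor `v` at position `i`, writing `x = ū v w` with
`u n = x (i - 1 - n)` and `w n = x (i + |v| + n)`, if `u ≠ w` then
`v < v̄ ↔ w < u`. -/
def SingularInfZ {A : Type*} [LinearOrder A] (x : ℤ → A) : Prop :=
  ∀ (i : ℤ) (v : List A),
    v = (List.range v.length).map (fun j => x (i + j)) → v ≠ [] → v ≠ v.reverse →
    (fun n : ℕ => x (i - 1 - n)) ≠ (fun n : ℕ => x (i + v.length + n)) →
    (Wlt v v.reverse ↔
      InfLt (fun n : ℕ => x (i + v.length + n)) (fun n : ℕ => x (i - 1 - n)))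


set_option linter.unusedSectionVars false
set_option maxHeartbeats 1000000

namespace SingAux

variable {A : Type*} [LinearOrder A]

lemma range_map_reverse (f : ℕ → A) (n : ℕ) :
    ((List.range n).map f).reverse = (List.range n).map (fun j => f (n - 1 - j)) := by
  apply List.ext_getElem (by simp)
  intro j h1 h2
  simp [List.getElem_reverse]


lemma flatmap_form {B : Type*} (n : ℕ) (f : ℕ → B) :
    (List.range n).flatMap (fun t => [f t]) = (List.range n).map f := by
  induction (List.range n) <;> simp_all

lemma window_form (x : ℤ → A) (p : ℤ) (n : ℕ) :
    ((List.range n).map (fun j => x (p + j))) = (List.range n).map (fun t : ℕ => x (p + (t:ℤ))) := by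
  show List.map (fun j => x (p + j)) ((List.range n).flatMap fun t : ℕ => [(t : ℤ)]) = _
  rw [flatmap_form, List.map_map]
  rfl

lemma wlt_map_iff (f g : ℕ → A) (n : ℕ) :
    Wlt ((List.range n).map f) ((List.range n).map g) ↔
      ∃ j, j < n ∧ (∀ l, l < j → f l = g l) ∧ f j < g j := by
  induction n generalizing f g with
  | zero => simp [Wlt]
  | succ n ih =>
    rw [List.range_succ_eq_map, List.map_cons, List.map_map, List.map_cons, List.map_map]
    simp only [Wlt]
    rw [ih]
    constructor
    · rintro (h0 | ⟨h0, j, hj, hl, hlt⟩)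
      · exact ⟨0, Nat.succ_pos _, fun l hl => absurd hl (Nat.not_lt_zero l), h0⟩
      · refine ⟨j+1, by omega, fun l hll => ?_, hlt⟩
        cases l with
        | zero => exact h0
        | succ l => exact hl l (by omega)
    · rintro ⟨j, hj, hl, hlt⟩
      cases j with
      | zero => exact Or.inl hlt
      | succ j => exact Or.inr ⟨hl 0 (by omega), j, by omega, fun l hll => hl (l+1) (by omega), hlt⟩

lemma inflt_iff (w u : ℕ → A) (t0 : ℕ) (hsym : ∀ t, t < t0 → w t = u t) (hasym : w t0 ≠ u t0) :
    InfLt w u ↔ w t0 < u t0 := by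
  constructor
  · rintro ⟨n, hlt, hn⟩
    rcases lt_trichotomy n t0 with h | h | h
    · exact absurd (hsym n h) (ne_of_lt hn)
    · subst h; exact hn
    · exact absurd (hlt t0 h) hasym
  · exact fun h => ⟨t0, hsym, h⟩

lemma wlt_rev_iff (f : ℕ → A) (n j0 : ℕ) (hj : j0 < n)
    (hsym : ∀ l, l < j0 → f l = f (n - 1 - l)) (hasym : f j0 ≠ f (n - 1 - j0)) :
    Wlt ((List.range n).map f) (((List.range n).map f).reverse) ↔ f j0 < f (n - 1 - j0) := by
  rw [range_map_reverse, wlt_map_iff]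
  constructor
  · rintro ⟨j, hjn, hl, hlt⟩
    rcases lt_trichotomy j j0 with h | h | h
    · exact absurd (hsym j h) (ne_of_lt hlt)
    · subst h; exact hlt
    · exact absurd (hl j0 h) hasym
  · exact fun h => ⟨j0, hj, hsym, h⟩

lemma listcntZ (a : A) (f : ℕ → A) (n : ℕ) :
    ((((List.range n).map f).count a : ℤ)) = ∑ k ∈ Finset.range n, (if f k = a then (1:ℤ) else 0) := by
  induction n with
  | zero => simp
  | succ n ih =>
    rw [List.range_succ, List.map_append, List.count_append, Finset.sum_range_succ, ← ih]
    push_cast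
    simp [List.count_cons]

lemma alt_sum (σ : ℕ → ℤ) (h1 : ∀ k, σ k = -1 ∨ σ k = 0 ∨ σ k = 1)
    (halt : ∀ k k', k < k' → σ k ≠ 0 → σ k' ≠ 0 → (∀ j, k < j → j < k' → σ j = 0) → σ k' = -σ k)
    (ℓ : ℕ) :
    |∑ k ∈ Finset.range ℓ, σ k| ≤ 1 := by
  suffices h : ∀ m, (∑ k ∈ Finset.range m, σ k = 0) ∨ ∃ k, k < m ∧ σ k ≠ 0 ∧
      (∑ k ∈ Finset.range m, σ k) = σ k ∧ ∀ j, k < j → j < m → σ j = 0 by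
    rcases h ℓ with h | ⟨k, _, _, hs, _⟩
    · simp [h]
    · rw [hs]; rcases h1 k with h|h|h <;> simp [h]
  intro m
  induction m with
  | zero => left; simp
  | succ m ih =>
    rw [Finset.sum_range_succ]
    by_cases hσ : σ m = 0
    · rcases ih with h | ⟨k, hk, hne, hs, hz⟩
      · left; simp [h, hσ]
      · right
        refine ⟨k, by omega, hne, by rw [hs, hσ, add_zero], fun j hj1 hj2 => ?_⟩
        rcases Nat.lt_succ_iff_lt_or_eq.mp hj2 with h|h
        · exact hz j hj1 h
        · rw [h]; exact hσ
    · rcases ih with h | ⟨k, hk, hne, hs, hz⟩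
      · right; exact ⟨m, by omega, hσ, by rw [h, zero_add], fun j hj1 hj2 => by omega⟩
      · left
        have := halt k m hk hne hσ hz
        rw [hs, this]; ring


set_option linter.unusedSectionVars false

variable {A : Type*} [LinearOrder A]

def e (x : ℤ → A) (a : A) (p : ℤ) : ℤ := if x p = a then 1 else 0

def cnt (x : ℤ → A) (a : A) (i : ℤ) (n : ℕ) : ℤ := ∑ k ∈ Finset.range n, e x a (i + k)

variable {x : ℤ → A} {a b : A} (hab : a < b) (hbin : ∀ i : ℤ, x i = a ∨ x i = b)

lemma e_mem (p : ℤ) : e x a p = 0 ∨ e x a p = 1 := by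
  unfold e; split <;> simp

lemma e_eq_of {p q : ℤ} (h : x p = x q) : e x a p = e x a q := by unfold e; rw [h]

include hab hbin

lemma x_eq_of_e {p q : ℤ} (h : e x a p = e x a q) : x p = x q := by
  unfold e at h
  rcases hbin p with h1 | h1 <;> rcases hbin q with h2 | h2 <;>
    simp [h1, h2, hab.ne, hab.ne'] at h ⊢

lemma e_sum_of_ne {p q : ℤ} (h : x p ≠ x q) : e x a p + e x a q = 1 := by
  unfold e
  rcases hbin p with h1 | h1 <;> rcases hbin q with h2 | h2 <;>
    simp [h1, h2, hab.ne, hab.ne'] at h ⊢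

lemma lt_iff_a {p q : ℤ} (h : x p ≠ x q) : (x p < x q ↔ x p = a) := by
  rcases hbin p with h1 | h1 <;> rcases hbin q with h2 | h2 <;>
    simp [h1, h2, hab, hab.ne, hab.ne', lt_asymm hab] at h ⊢

lemma e_eq_iff {p q : ℤ} (h : e x a p = e x a q) : (x p = a ↔ x q = a) := by
  unfold e at h; split_ifs at h <;> simp_all

omit hab hbin

lemma cnt_split (i : ℤ) (m n : ℕ) : cnt x a i (m + n) = cnt x a i m + cnt x a (i + m) n := by
  unfold cnt
  rw [Finset.sum_range_add]
  congr 1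
  apply Finset.sum_congr rfl
  intro k _
  congr 1
  push_cast
  ring

lemma cnt_one (i : ℤ) : cnt x a i 1 = e x a i := by
  unfold cnt
  rw [Finset.sum_range_one]
  norm_num

lemma cnt_mirror (i j : ℤ) (n : ℕ) (h : ∀ t : ℕ, t < n → x (i + t) = x (j + (↑(n - 1 - t) : ℤ))) :
    cnt x a i n = cnt x a j n := by
  unfold cnt
  rw [← Finset.sum_range_reflect (fun t => e x a (j + ↑t)) n]
  apply Finset.sum_congr rfl
  intro k hk
  exact e_eq_of (h k (Finset.mem_range.mp hk))


end SingAux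


namespace SingAux

variable {A : Type*} [LinearOrder A] {x : ℤ → A} {a b : A}
  (hab : a < b) (hbin : ∀ i : ℤ, x i = a ∨ x i = b)

include hab hbin in
lemma disjoint_unbal (j1 j2 : ℤ) (ℓ : ℕ) (hle : j1 + ℓ ≤ j2)
    (h2 : 2 ≤ |cnt x a j2 ℓ - cnt x a j1 ℓ|) : ¬ SingularInfZ x := by
  intro hS
  set σ : ℕ → ℤ := fun k => if k < ℓ then e x a (j2 + ((ℓ - 1 - k : ℕ) : ℤ)) - e x a (j1 + (k : ℤ)) else 0 with hσdef
  have hsum : ∑ k ∈ Finset.range ℓ, σ k = cnt x a j2 ℓ - cnt x a j1 ℓ := by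
    have h1 : ∑ k ∈ Finset.range ℓ, σ k
        = ∑ k ∈ Finset.range ℓ, (e x a (j2 + ((ℓ - 1 - k : ℕ) : ℤ)) - e x a (j1 + (k : ℤ))) := by
      apply Finset.sum_congr rfl; intro k hk
      simp [hσdef, Finset.mem_range.mp hk]
    rw [h1, Finset.sum_sub_distrib]
    congr 1
    exact Finset.sum_range_reflect (fun k => e x a (j2 + (k : ℤ))) ℓ
  have h1 : ∀ k, σ k = -1 ∨ σ k = 0 ∨ σ k = 1 := by
    intro k
    simp only [hσdef]
    split
    · rcases e_mem (x := x) (a := a) (j2 + ((ℓ - 1 - k : ℕ) : ℤ)) with h|h <;>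
        rcases e_mem (x := x) (a := a) (j1 + (k : ℤ)) with h'|h' <;> omega
    · omega
  have halt : ∀ k k', k < k' → σ k ≠ 0 → σ k' ≠ 0 →
      (∀ j, k < j → j < k' → σ j = 0) → σ k' = -σ k := by
    intro k k' hkk' hσk hσk' hz
    have hkℓ : k < ℓ := by by_contra h; exact hσk (by simp [hσdef, h])
    have hk'ℓ : k' < ℓ := by by_contra h; exact hσk' (by simp [hσdef, h])
    set p : ℤ := j1 + (k' : ℤ) with hp
    set q : ℤ := j2 + ((ℓ - 1 - k' : ℕ) : ℤ) with hq
    set p' : ℤ := j1 + (k : ℤ) with hp'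
    set q' : ℤ := j2 + ((ℓ - 1 - k : ℕ) : ℤ) with hq'
    set n : ℕ := (q + 1 - p).toNat with hn
    have hnq : (n : ℤ) = q + 1 - p := by
      rw [hn]; rw [Int.toNat_of_nonneg]; omega
    have hn2 : 2 ≤ n := by omega
    have hpqne : x p ≠ x q := by
      intro h
      apply hσk'
      have he := e_eq_of (x := x) (a := a) h
      simp only [hσdef, if_pos hk'ℓ, ← hp, ← hq, ← he]
      ring
    have hpq'ne : x p' ≠ x q' := by
      intro h
      apply hσk
      have he := e_eq_of (x := x) (a := a) h
      simp only [hσdef, if_pos hkℓ, ← hp', ← hq', ← he]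
      ring
    -- the factor v
    set v : List A := (List.range n).map (fun t : ℕ => x (p + (t : ℤ))) with hv
    have hvlen : v.length = n := by simp [hv]
    have hveq : v = (List.range v.length).map (fun j => x (p + j)) := by
      rw [window_form, hvlen]
    have hne : v ≠ [] := by
      intro h
      rw [h] at hvlen
      simp at hvlen
      omega
    have hQ : p + ((n - 1 : ℕ) : ℤ) = q := by omega
    have hpal : v ≠ v.reverse := by
      intro h
      rw [hv, range_map_reverse, List.map_eq_map_iff] at h
      have h0 := h 0 (List.mem_range.mpr (by omega))
      simp only [Nat.sub_zero] at h0
      rw [hQ] at h0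
      simp at h0
      exact hpqne h0
    set t0 : ℕ := k' - k - 1 with ht0
    have hL : p - 1 - (t0 : ℤ) = p' := by omega
    have hR : p + (n : ℤ) + (t0 : ℤ) = q' := by omega
    have hray : (fun t : ℕ => x (p - 1 - (t : ℤ))) ≠ (fun t : ℕ => x (p + (v.length : ℤ) + (t : ℤ))) := by
      intro h
      have h0 := congrFun h t0
      simp only [hvlen] at h0
      rw [hL, hR] at h0
      exact hpq'ne h0
    have hiff := hS p v hveq hne hpal hray
    simp only [hvlen] at hiff
    -- left side
    have hwlt : Wlt v v.reverse ↔ x p < x q := by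
      rw [hv, wlt_rev_iff (fun t : ℕ => x (p + (t : ℤ))) n 0 (by omega)
        (fun l hl => absurd hl (Nat.not_lt_zero l))
        (by simp only [Nat.sub_zero]; rw [hQ]; simpa using hpqne)]
      simp only [Nat.sub_zero]
      rw [hQ]
      simp
    -- right side
    have hinf : InfLt (fun t : ℕ => x (p + (n : ℤ) + (t : ℤ))) (fun t : ℕ => x (p - 1 - (t : ℤ)))
        ↔ x q' < x p' := by
      rw [inflt_iff _ _ t0 ?_ ?_]
      · rw [hL, hR]
      · intro t ht
        have hkhat : k < k' - 1 - t ∧ k' - 1 - t < k' := by omega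
        have hz' := hz (k' - 1 - t) hkhat.1 hkhat.2
        simp only [hσdef, if_pos (by omega : k' - 1 - t < ℓ)] at hz'
        have he : e x a (j2 + ((ℓ - 1 - (k' - 1 - t) : ℕ) : ℤ)) = e x a (j1 + ((k' - 1 - t : ℕ) : ℤ)) := by omega
        have hx := x_eq_of_e hab hbin he
        have e1 : p + (n : ℤ) + (t : ℤ) = j2 + ((ℓ - 1 - (k' - 1 - t) : ℕ) : ℤ) := by omega
        have e2 : p - 1 - (t : ℤ) = j1 + ((k' - 1 - t : ℕ) : ℤ) := by omega
        rw [e1, e2]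
        exact hx
      · rw [hL, hR]
        exact hpq'ne.symm
    rw [hwlt, hinf] at hiff
    rw [lt_iff_a hab hbin hpqne, lt_iff_a hab hbin hpq'ne.symm] at hiff
    -- hiff : x p = a ↔ x q' = a
    have hee : e x a p = e x a q' := by
      unfold e
      by_cases h1 : x p = a
      · rw [if_pos h1, if_pos (hiff.mp h1)]
      · rw [if_neg h1, if_neg (fun h => h1 (hiff.mpr h))]
    have s1 := e_sum_of_ne hab hbin hpqne
    have s2 := e_sum_of_ne hab hbin hpq'ne
    simp only [hσdef, if_pos hkℓ, if_pos hk'ℓ, ← hp, ← hq, ← hp', ← hq']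
    omega
  have := alt_sum σ h1 halt ℓ
  rw [hsum] at this
  rw [abs_le] at this
  rcases le_abs.mp h2 with h | h <;> linarith

include hab hbin in
lemma unbal_lt (i1 i2 : ℤ) (n : ℕ) (hlt : i1 < i2)
    (h2 : 2 ≤ |cnt x a i2 n - cnt x a i1 n|) : ¬ SingularInfZ x := by
  by_cases hd : i1 + (n:ℤ) ≤ i2
  · exact disjoint_unbal hab hbin i1 i2 n hd h2
  · push_neg at hd
    set d : ℕ := (i2 - i1).toNat with hdd
    have hdz : (d : ℤ) = i2 - i1 := Int.toNat_of_nonneg (by omega)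
    have hd0 : 0 < d := by omega
    have hdn : d < n := by omega
    have s1 : cnt x a i1 n = cnt x a i1 d + cnt x a i2 (n - d) := by
      have e1 : n = d + (n - d) := by omega
      conv_lhs => rw [e1]
      rw [cnt_split, show i1 + (d:ℤ) = i2 by omega]
    have s2 : cnt x a i2 n = cnt x a i2 (n - d) + cnt x a (i1 + (n:ℤ)) d := by
      have e2 : n = (n - d) + d := by omega
      conv_lhs => rw [e2]
      rw [cnt_split, show i2 + ((n - d : ℕ):ℤ) = i1 + (n:ℤ) by omega]
    apply disjoint_unbal hab hbin i1 (i1 + (n:ℤ)) d (by omega)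
    have heq : cnt x a (i1 + (n:ℤ)) d - cnt x a i1 d = cnt x a i2 n - cnt x a i1 n := by omega
    rw [heq]
    exact h2

include hab hbin in
lemma unbal (i1 i2 : ℤ) (n : ℕ)
    (h2 : 2 ≤ |cnt x a i2 n - cnt x a i1 n|) : ¬ SingularInfZ x := by
  rcases lt_trichotomy i1 i2 with h | h | h
  · exact unbal_lt hab hbin i1 i2 n h h2
  · rw [h] at h2; simp at h2
  · exact unbal_lt hab hbin i2 i1 n h (by rwa [abs_sub_comm])

end SingAux


open SingAux in
theorem biinfinite_binary_singular_iff_balanced {A : Type*} [LinearOrder A]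
    (a b : A) (hab : a < b) (x : ℤ → A) (hbin : ∀ i : ℤ, x i = a ∨ x i = b) :
    SingularInfZ x ↔
      ∀ u v : List A, FactorZ x u → FactorZ x v → u.length = v.length →
        |(u.count a : ℤ) - (v.count a : ℤ)| ≤ 1 := by
  classical
  constructor
  · -- singular → balanced
    intro hS u v hu hv hlen
    by_contra hgt
    push_neg at hgt
    obtain ⟨i1, hu⟩ := hu
    obtain ⟨i2, hv⟩ := hv
    rw [window_form] at hu hv
    have hcu : ((u.count a : ℤ)) = cnt x a i1 u.length := by
      conv_lhs => rw [hu]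
      rw [listcntZ]
      rfl
    have hcv : ((v.count a : ℤ)) = cnt x a i2 u.length := by
      conv_lhs => rw [hv]
      rw [listcntZ, ← hlen]
      rfl
    refine unbal hab hbin i1 i2 u.length ?_ hS
    have h2 : 2 ≤ |(u.count a : ℤ) - (v.count a : ℤ)| := by linarith
    rw [hcu, hcv, abs_sub_comm] at h2
    exact h2
  · -- balanced → singular
    intro hbal i v hveq hne hpal hray
    rw [window_form] at hveq
    set n := v.length with hnv
    have hn1 : 1 ≤ n := by
      have := List.length_pos_iff.mpr hne
      omega
    have hex1 : ∃ j, j < n ∧ x (i + (j:ℤ)) ≠ x (i + ((n - 1 - j : ℕ):ℤ)) := by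
      by_contra hcon
      push_neg at hcon
      apply hpal
      conv_lhs => rw [hveq]
      conv_rhs => rw [hveq]
      rw [range_map_reverse]
      apply List.map_congr_left
      intro t ht
      exact hcon t (List.mem_range.mp ht)
    have hspec1 := Nat.find_spec hex1
    set j0 := Nat.find hex1 with hj0def
    obtain ⟨hj0n, hasym1⟩ := hspec1
    have hsym1 : ∀ l, l < j0 → x (i + (l:ℤ)) = x (i + ((n - 1 - l : ℕ):ℤ)) := by
      intro l hl
      have hmin := Nat.find_min hex1 hl
      push_neg at hmin
      exact hmin (by omega)
    have hex2 : ∃ k : ℕ, x (i - 1 - (k:ℤ)) ≠ x (i + (n:ℤ) + (k:ℤ)) := by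
      by_contra hcon
      push_neg at hcon
      apply hray
      funext t
      exact hcon t
    have hasym2 := Nat.find_spec hex2
    set k0 := Nat.find hex2 with hk0def
    have hsym2 : ∀ t, t < k0 → x (i - 1 - (t:ℤ)) = x (i + (n:ℤ) + (t:ℤ)) := by
      intro t ht
      exact not_not.mp (Nat.find_min hex2 ht)
    have hq1 : i + ((n - 1 - j0 : ℕ):ℤ) = i + (n:ℤ) - 1 - (j0:ℤ) := by omega
    have hasymq := hasym1
    rw [hq1] at hasymq
    -- the two nearest asymmetric pairs must have opposite orientation
    have key : x (i + (j0:ℤ)) ≠ x (i - 1 - (k0:ℤ)) := by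
      intro hsame
      have c1 : cnt x a (i - 1 - (k0:ℤ)) (j0 + k0 + 2)
          = e x a (i - 1 - (k0:ℤ)) + cnt x a (i - (k0:ℤ)) (j0 + k0)
            + e x a (i + (j0:ℤ)) := by
        rw [show j0 + k0 + 2 = 1 + ((j0 + k0) + 1) by omega, cnt_split, cnt_one, cnt_split,
          cnt_one]
        rw [show (i - 1 - (k0:ℤ)) + ((1:ℕ):ℤ) = i - (k0:ℤ) by push_cast; ring,
          show i - (k0:ℤ) + ((j0 + k0 : ℕ):ℤ) = i + (j0:ℤ) by push_cast; ring]
        ring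
      have c2 : cnt x a (i + (n:ℤ) - 1 - (j0:ℤ)) (j0 + k0 + 2)
          = e x a (i + (n:ℤ) - 1 - (j0:ℤ)) + cnt x a (i + (n:ℤ) - (j0:ℤ)) (j0 + k0)
            + e x a (i + (n:ℤ) + (k0:ℤ)) := by
        rw [show j0 + k0 + 2 = 1 + ((j0 + k0) + 1) by omega, cnt_split, cnt_one, cnt_split,
          cnt_one]
        rw [show (i + (n:ℤ) - 1 - (j0:ℤ)) + ((1:ℕ):ℤ) = i + (n:ℤ) - (j0:ℤ) by push_cast; ring,
          show i + (n:ℤ) - (j0:ℤ) + ((j0 + k0 : ℕ):ℤ) = i + (n:ℤ) + (k0:ℤ) by push_cast; ring]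
        ring
      have cmid : cnt x a (i - (k0:ℤ)) (j0 + k0) = cnt x a (i + (n:ℤ) - (j0:ℤ)) (j0 + k0) := by
        apply cnt_mirror
        intro t ht
        by_cases hc : t < k0
        · have hs := hsym2 (k0 - 1 - t) (by omega)
          rw [show i - (k0:ℤ) + (t:ℤ) = i - 1 - ((k0 - 1 - t : ℕ):ℤ) by omega,
            show i + (n:ℤ) - (j0:ℤ) + ((j0 + k0 - 1 - t : ℕ):ℤ)
              = i + (n:ℤ) + ((k0 - 1 - t : ℕ):ℤ) by omega]
          exact hs
        · have hs := hsym1 (t - k0) (by omega)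
          rw [show i - (k0:ℤ) + (t:ℤ) = i + ((t - k0 : ℕ):ℤ) by omega,
            show i + (n:ℤ) - (j0:ℤ) + ((j0 + k0 - 1 - t : ℕ):ℤ)
              = i + ((n - 1 - (t - k0) : ℕ):ℤ) by omega]
          exact hs
      have s1 := e_sum_of_ne hab hbin hasymq
      have s2 := e_sum_of_ne hab hbin hasym2
      have he : e x a (i + (j0:ℤ)) = e x a (i - 1 - (k0:ℤ)) := e_eq_of hsame
      have hm1 := e_mem (x := x) (a := a) (i + (j0:ℤ))
      have hL : FactorZ x ((List.range (j0 + k0 + 2)).map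
          (fun t : ℕ => x ((i - 1 - (k0:ℤ)) + (t:ℤ)))) := by
        refine ⟨i - 1 - (k0:ℤ), ?_⟩
        rw [window_form]
        simp
      have hR : FactorZ x ((List.range (j0 + k0 + 2)).map
          (fun t : ℕ => x ((i + (n:ℤ) - 1 - (j0:ℤ)) + (t:ℤ)))) := by
        refine ⟨i + (n:ℤ) - 1 - (j0:ℤ), ?_⟩
        rw [window_form]
        simp
      have hbal' := hbal _ _ hL hR (by simp)
      rw [listcntZ, listcntZ] at hbal'
      have hbal'' : |cnt x a (i - 1 - (k0:ℤ)) (j0 + k0 + 2)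
          - cnt x a (i + (n:ℤ) - 1 - (j0:ℤ)) (j0 + k0 + 2)| ≤ 1 := hbal'
      rw [abs_le] at hbal''
      omega
    -- conclude the iff
    have hq'p'ne : x (i + (n:ℤ) + (k0:ℤ)) ≠ x (i - 1 - (k0:ℤ)) := Ne.symm hasym2
    have s1 := e_sum_of_ne hab hbin hasymq
    have s2 := e_sum_of_ne hab hbin hasym2
    have hene : e x a (i + (j0:ℤ)) ≠ e x a (i - 1 - (k0:ℤ)) :=
      fun h => key (x_eq_of_e hab hbin h)
    have hm1 := e_mem (x := x) (a := a) (i + (j0:ℤ))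
    have hm2 := e_mem (x := x) (a := a) (i - 1 - (k0:ℤ))
    have hm3 := e_mem (x := x) (a := a) (i + (n:ℤ) + (k0:ℤ))
    have hee : e x a (i + (j0:ℤ)) = e x a (i + (n:ℤ) + (k0:ℤ)) := by omega
    have hiffa := e_eq_iff hab hbin hee
    have hwlt : Wlt v v.reverse ↔ x (i + (j0:ℤ)) < x (i + (n:ℤ) - 1 - (j0:ℤ)) := by
      conv_lhs => rw [hveq]
      rw [wlt_rev_iff (fun t : ℕ => x (i + (t:ℤ))) n j0 hj0n hsym1 hasym1]
      rw [hq1]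
    have hinf : InfLt (fun t : ℕ => x (i + (n:ℤ) + (t:ℤ))) (fun t : ℕ => x (i - 1 - (t:ℤ)))
        ↔ x (i + (n:ℤ) + (k0:ℤ)) < x (i - 1 - (k0:ℤ)) :=
      inflt_iff _ _ k0 (fun t ht => (hsym2 t ht).symm) hq'p'ne
    rw [hwlt, hinf, lt_iff_a hab hbin hasymq, lt_iff_a hab hbin hq'p'ne]
    exact hiffa
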